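/- If x ∈ Γ_k^n (i.e., s_j(x) > 0 for all j = 1,...,k) and x_1 ≥ x_2 ≥ ... ≥ x_n, then x_1 · s_{k-1}(x|1) ≥ (k/n)·s_k(x). -/
import Mathlib


open Finset

/-- The `k`-th elementary symmetric polynomial of `x ∈ ℝⁿ`. -/
noncomputable def esymm (n k : ℕ) (x : Fin n → ℝ) : ℝ :=
  ∑ A ∈ Finset.powersetCard k (Finset.univ : Finset (Fin n)), ∏ i ∈ A, x i

/-- The Gårding cone `Γₖⁿ = {x : sₗ(x) > 0, l = 1,…,k}`. -/
def GammaK (n k : ℕ) (x : Fin n → ℝ) : Prop :=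
  ∀ l, 1 ≤ l → l ≤ k → 0 < esymm n l x

namespace FCLB

variable {n : ℕ}

/-- Elementary symmetric function restricted to a subset of indices. -/
noncomputable def eS (s : Finset (Fin n)) (j : ℕ) (x : Fin n → ℝ) : ℝ :=
  ∑ A ∈ s.powersetCard j, ∏ i ∈ A, x i

lemma esymm_eq_eS (j : ℕ) (x : Fin n → ℝ) : esymm n j x = eS univ j x := rfl

lemma pcard_erase (s : Finset (Fin n)) (i : Fin n) (j : ℕ) :
    (s.erase i).powersetCard j = (s.powersetCard j).filter (fun A => i ∉ A) := by
  ext A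
  simp only [mem_powersetCard, mem_filter, subset_erase]
  tauto

lemma eS_update_zero (s : Finset (Fin n)) (j : ℕ) (x : Fin n → ℝ) (i : Fin n) :
    eS s j (Function.update x i 0) = eS (s.erase i) j x := by
  rw [eS, eS, pcard_erase, sum_filter]
  apply Finset.sum_congr rfl
  intro A hA
  by_cases hiA : i ∈ A
  · rw [if_neg (by simpa using hiA)]
    exact Finset.prod_eq_zero hiA (by simp)
  · rw [if_pos hiA]
    refine Finset.prod_congr rfl (fun l hl => ?_)
    exact Function.update_of_ne (by rintro rfl; exact hiA hl) _ _

lemma eS_split {s : Finset (Fin n)} {i : Fin n} (hi : i ∈ s) (j : ℕ) (x : Fin n → ℝ) :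
    eS s (j+1) x = x i * eS (s.erase i) j x + eS (s.erase i) (j+1) x := by
  rw [eS, ← Finset.sum_filter_add_sum_filter_not (s.powersetCard (j+1)) (fun A => i ∈ A)]
  congr 1
  · rw [eS, mul_sum]
    refine Finset.sum_bij' (fun A _ => A.erase i) (fun B _ => insert i B) ?_ ?_ ?_ ?_ ?_
    · intro A hA
      simp only [mem_filter, mem_powersetCard] at hA
      simp only [mem_powersetCard]
      constructor
      · exact fun l hl => mem_erase.mpr ⟨(mem_erase.mp hl).1, hA.1.1 (mem_erase.mp hl).2⟩
      · rw [card_erase_of_mem hA.2, hA.1.2]; omega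
    · intro B hB
      simp only [mem_powersetCard, subset_erase] at hB
      simp only [mem_filter, mem_powersetCard]
      refine ⟨⟨?_, ?_⟩, mem_insert_self i B⟩
      · intro l hl
        rcases mem_insert.mp hl with h | h
        · exact h ▸ hi
        · exact hB.1.1 h
      · rw [card_insert_of_notMem hB.1.2, hB.2]
    · intro A hA
      simp only [mem_filter] at hA
      exact insert_erase hA.2
    · intro B hB
      simp only [mem_powersetCard, subset_erase] at hB
      exact erase_insert hB.1.2
    · intro A hA
      simp only [mem_filter] at hA
      exact (Finset.mul_prod_erase A x hA.2).symm
  · rw [eS, pcard_erase]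

lemma eS_sum_erase (s : Finset (Fin n)) (j : ℕ) (x : Fin n → ℝ) :
    ∑ i ∈ s, eS (s.erase i) j x = ((s.card - j : ℕ) : ℝ) * eS s j x := by
  simp_rw [eS, pcard_erase, sum_filter]
  rw [Finset.sum_comm, mul_sum]
  apply sum_congr rfl
  intro A hA
  rw [← sum_filter, sum_const]
  have h1 : s.filter (fun i => i ∉ A) = s \ A := (Finset.sdiff_eq_filter s A).symm
  have hsub : A ⊆ s := (mem_powersetCard.mp hA).1
  have hcard : A.card = j := (mem_powersetCard.mp hA).2
  rw [h1, Finset.card_sdiff_of_subset hsub, hcard, nsmul_eq_mul]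

lemma eS_self (s : Finset (Fin n)) (x : Fin n → ℝ) : eS s s.card x = ∏ i ∈ s, x i := by
  rw [eS, powersetCard_self, sum_singleton]

lemma eS_pred {s : Finset (Fin n)} (hs : s.Nonempty) (x : Fin n → ℝ) :
    eS s (s.card - 1) x = ∑ i ∈ s, ∏ j ∈ s.erase i, x j := by
  have h := eS_sum_erase s (s.card - 1) x
  have hc : 1 ≤ s.card := Finset.card_pos.mpr hs
  have h1 : s.card - (s.card - 1) = 1 := by omega
  rw [h1, Nat.cast_one, one_mul] at h
  rw [← h]
  apply sum_congr rfl
  intro i hi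
  conv_lhs => rw [show s.card - 1 = (s.erase i).card by rw [card_erase_of_mem hi]]
  rw [eS_self]

lemma key_identity (s : Finset (Fin n)) (x : Fin n → ℝ) (h2 : 2 ≤ s.card) :
    (eS s (s.card - 1) x)^2
      = (∑ i ∈ s, (∏ j ∈ s.erase i, x j)^2)
        + (∏ i ∈ s, x i) * (2 * eS s (s.card - 2) x) := by
  have hne : s.Nonempty := card_pos.mp (by omega)
  rw [eS_pred hne, sq, Finset.sum_mul_sum]
  have hstep : ∀ i ∈ s, ∑ j ∈ s, (∏ l ∈ s.erase i, x l) * (∏ l ∈ s.erase j, x l)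
      = (∏ l ∈ s.erase i, x l)^2 + (∏ l ∈ s, x l) * eS (s.erase i) (s.card - 2) x := by
    intro i hi
    rw [← Finset.add_sum_erase _ _ hi, sq]
    congr 1
    have hterm : ∀ j ∈ s.erase i, (∏ l ∈ s.erase i, x l) * (∏ l ∈ s.erase j, x l)
        = (∏ l ∈ s, x l) * ∏ l ∈ (s.erase i).erase j, x l := by
      intro j hj
      have hji : j ≠ i := (mem_erase.mp hj).1
      have hie : i ∈ s.erase j := mem_erase.mpr ⟨Ne.symm hji, hi⟩
      have e1 : ∏ l ∈ s.erase j, x l = x i * ∏ l ∈ (s.erase i).erase j, x l := by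
        rw [Finset.erase_right_comm]
        exact (Finset.mul_prod_erase _ x hie).symm
      have e2 : ∏ l ∈ s, x l = x i * ∏ l ∈ s.erase i, x l :=
        (Finset.mul_prod_erase s x hi).symm
      rw [e1, e2]; ring
    rw [Finset.sum_congr rfl hterm, ← mul_sum]
    congr 1
    have hne2 : (s.erase i).Nonempty := by
      rw [← card_pos, card_erase_of_mem hi]; omega
    have h := eS_pred hne2 x
    rw [card_erase_of_mem hi, show s.card - 1 - 1 = s.card - 2 by omega] at h
    rw [h]
  rw [Finset.sum_congr rfl hstep, Finset.sum_add_distrib, ← mul_sum, eS_sum_erase,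
    show s.card - (s.card - 2) = 2 by omega]
  push_cast
  ring

lemma esymm_zero_level (x : Fin n → ℝ) : esymm n 0 x = 1 := by
  unfold esymm
  rw [Finset.powersetCard_zero, sum_singleton, prod_empty]

lemma esymm_of_lt {j : ℕ} (h : n < j) (x : Fin n → ℝ) : esymm n j x = 0 := by
  unfold esymm
  rw [Finset.powersetCard_eq_empty.mpr (by simpa using h), sum_empty]

lemma esymm_one_level (x : Fin n → ℝ) : esymm n 1 x = ∑ i, x i := by
  unfold esymm
  rw [Finset.powersetCard_one, Finset.sum_map]
  simp

lemma esymm_split (x : Fin n → ℝ) (i : Fin n) (j : ℕ) :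
    esymm n (j+1) x
      = x i * esymm n j (Function.update x i 0) + esymm n (j+1) (Function.update x i 0) := by
  rw [esymm_eq_eS, esymm_eq_eS, esymm_eq_eS, eS_update_zero, eS_update_zero]
  exact eS_split (mem_univ i) j x

lemma esymm_sum_update (x : Fin n → ℝ) (j : ℕ) :
    ∑ i, esymm n j (Function.update x i 0) = ((n - j : ℕ) : ℝ) * esymm n j x := by
  simp_rw [esymm_eq_eS, eS_update_zero]
  rw [eS_sum_erase]
  congr 2 <;> simp [Finset.card_fin]

lemma count_supersets {j : ℕ} (B : Finset (Fin n)) :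
    (((Finset.univ : Finset (Fin n)).powersetCard j).filter (fun A => B ⊆ A)).card
      = if B.card ≤ j then (n - B.card).choose (j - B.card) else 0 := by
  split_ifs with h
  · have hcard : (Finset.univ \ B).card = n - B.card := by
      rw [card_sdiff_of_subset (subset_univ B)]; simp [Finset.card_fin]
    rw [← hcard, ← Finset.card_powersetCard (j - B.card) (Finset.univ \ B)]
    apply Finset.card_bij' (fun A _ => A \ B) (fun C _ => C ∪ B)
    · intro A hA
      simp only [mem_filter, mem_powersetCard] at hA ⊢
      refine ⟨sdiff_subset_sdiff (subset_univ A) (Finset.Subset.refl B), ?_⟩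
      rw [card_sdiff_of_subset hA.2, hA.1.2]
    · intro C hC
      simp only [mem_powersetCard, mem_filter] at hC ⊢
      have hdisj : Disjoint C B := (Finset.subset_sdiff.mp hC.1).2
      refine ⟨⟨subset_univ _, ?_⟩, subset_union_right⟩
      rw [Finset.card_union_of_disjoint hdisj, hC.2]
      have hB : B.card ≤ n := by
        have := Finset.card_le_card (subset_univ B)
        simpa [Finset.card_fin] using this
      have hC2 : C.card = j - B.card := hC.2
      omega
    · intro A hA
      simp only [mem_filter] at hA
      exact Finset.sdiff_union_of_subset hA.2
    · intro C hC
      simp only [mem_powersetCard] at hC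
      have hdisj : Disjoint C B := (Finset.subset_sdiff.mp hC.1).2
      rw [Finset.union_sdiff_distrib, Finset.sdiff_self, Finset.union_empty,
        Finset.sdiff_eq_self_of_disjoint hdisj]
  · rw [Finset.filter_false_of_mem, Finset.card_empty]
    intro A hA hBA
    have := Finset.card_le_card hBA
    rw [(mem_powersetCard.mp hA).2] at this
    omega

lemma esymm_add_const (j : ℕ) (x : Fin n → ℝ) (t : ℝ) :
    esymm n j (fun i => x i + t)
      = ∑ m ∈ Finset.range (n+1),
          ((if m ≤ j then (n - m).choose (j - m) else 0 : ℕ) : ℝ) * t^(j-m) * esymm n m x := by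
  have step1 : esymm n j (fun i => x i + t)
      = ∑ A ∈ (Finset.univ : Finset (Fin n)).powersetCard j,
          ∑ B ∈ A.powerset, (∏ i ∈ B, x i) * t^(j - B.card) := by
    unfold esymm
    refine sum_congr rfl fun A hA => ?_
    have hAc : A.card = j := (mem_powersetCard.mp hA).2
    rw [Finset.prod_add]
    refine sum_congr rfl fun B hB => ?_
    have hBA : B ⊆ A := mem_powerset.mp hB
    rw [Finset.prod_const, card_sdiff_of_subset hBA, hAc]
  have step2 : esymm n j (fun i => x i + t)
      = ∑ B ∈ (Finset.univ : Finset (Fin n)).powerset,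
          ((((Finset.univ : Finset (Fin n)).powersetCard j).filter (fun A => B ⊆ A)).card : ℝ)
            * ((∏ i ∈ B, x i) * t^(j - B.card)) := by
    rw [step1]
    have e1 : ∀ A ∈ (Finset.univ : Finset (Fin n)).powersetCard j,
        ∑ B ∈ A.powerset, (∏ i ∈ B, x i) * t^(j - B.card)
          = ∑ B ∈ (Finset.univ : Finset (Fin n)).powerset,
              if B ⊆ A then (∏ i ∈ B, x i) * t^(j - B.card) else 0 := by
      intro A hA
      rw [← sum_filter]
      congr 1
      ext C
      simp [mem_powerset]
    rw [Finset.sum_congr rfl e1, Finset.sum_comm]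
    refine sum_congr rfl fun B hB => ?_
    rw [← sum_filter, sum_const, nsmul_eq_mul]
  rw [step2, Finset.sum_powerset]
  have hcu : (Finset.univ : Finset (Fin n)).card = n := by simp [Finset.card_fin]
  rw [hcu]
  refine sum_congr rfl fun m hm => ?_
  have e2 : ∀ B ∈ (Finset.univ : Finset (Fin n)).powersetCard m,
      ((((Finset.univ : Finset (Fin n)).powersetCard j).filter (fun A => B ⊆ A)).card : ℝ)
          * ((∏ i ∈ B, x i) * t^(j - B.card))
        = ((if m ≤ j then (n - m).choose (j - m) else 0 : ℕ) : ℝ) * t^(j-m) * (∏ i ∈ B, x i) := by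
    intro B hB
    have hBc : B.card = m := (mem_powersetCard.mp hB).2
    rw [count_supersets, hBc]
    ring
  rw [Finset.sum_congr rfl e2, ← mul_sum]
  rfl

lemma esymm_add_pos {j : ℕ} (hj : j ≤ n) (x : Fin n → ℝ)
    (hx : ∀ l, l ≤ j → 0 < esymm n l x) {t : ℝ} (ht : 0 ≤ t) :
    0 < esymm n j (fun i => x i + t) := by
  rw [esymm_add_const j x t]
  apply Finset.sum_pos'
  · intro m hm
    by_cases h : m ≤ j
    · rw [if_pos h]
      have := hx m (by omega)
      positivity
    · rw [if_neg h]
      simp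
  · refine ⟨j, mem_range.mpr (by omega), ?_⟩
    rw [if_pos le_rfl, Nat.sub_self, Nat.choose_zero_right, pow_zero, Nat.cast_one,
      one_mul, one_mul]
    exact hx j le_rfl

open Polynomial in
lemma newton_special (k : ℕ) (hk2 : 2 ≤ k) (hkn : k ≤ n) (v : Fin n → ℝ)
    (h1 : esymm n (k-1) v = 0) (h2 : 0 < esymm n (k-2) v) : esymm n k v ≤ 0 := by
  by_contra h3
  push_neg at h3
  set s : Multiset ℝ := Multiset.map v Finset.univ.val with hs_def
  have hs : Multiset.card s = n := by simp [hs_def]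
  set P : Polynomial ℝ := (s.map (fun a => X - C a)).prod with hP_def
  have hPm : P.Monic := monic_multiset_prod_of_monic _ _ (fun a _ => monic_X_sub_C a)
  have hPdeg : P.natDegree = n := by
    rw [hP_def, natDegree_multiset_prod_X_sub_C_eq_card, hs]
  have hProots : P.roots = s := roots_multiset_prod_X_sub_C s
  have hesymm_ms : ∀ m : ℕ, s.esymm m = esymm n m v := by
    intro m
    rw [hs_def, Finset.esymm_map_val]
    rfl
  have hPcoeff : ∀ m, m ≤ n → P.coeff (n - m) = (-1)^m * esymm n m v := by
    intro m hm
    have h := Multiset.prod_X_sub_C_coeff s (k := n - m) (by omega)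
    rw [← hP_def] at h
    rw [h, hs, show n - (n - m) = m by omega, hesymm_ms]
  set Q := derivative^[n-k] P with hQ_def
  have hQcoeff : ∀ m, m ≤ k →
      Q.coeff (k - m) = ((n-m).descFactorial (n-k) : ℝ) * ((-1)^m * esymm n m v) := by
    intro m hm
    rw [hQ_def, Polynomial.coeff_iterate_derivative, show k - m + (n-k) = n - m by omega,
      hPcoeff m (by omega), nsmul_eq_mul]
  have hQk : Q.coeff k = (n.descFactorial (n-k) : ℝ) := by
    have h := hQcoeff 0 (by omega)
    rw [Nat.sub_zero] at h
    rw [h, esymm_zero_level]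
    simp
  have hdfpos : 0 < n.descFactorial (n-k) := by
    rw [Nat.pos_iff_ne_zero]
    intro hz
    rw [Nat.descFactorial_eq_zero_iff_lt] at hz
    omega
  have hQkne : Q.coeff k ≠ 0 := by
    rw [hQk]
    exact_mod_cast (Nat.cast_pos.mpr hdfpos).ne'
  have hQdeg : Q.natDegree = k := by
    refine le_antisymm ?_ (le_natDegree_of_ne_zero hQkne)
    calc Q.natDegree ≤ P.natDegree - (n-k) := natDegree_iterate_derivative P (n-k)
    _ = k := by rw [hPdeg]; omega
  have hcard : ∀ m : ℕ, n - m ≤ Multiset.card ((derivative^[m] P).roots) := by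
    intro m
    induction m with
    | zero => simp [hProots, hs]
    | succ m ih =>
      have h := Polynomial.card_roots_le_derivative (derivative^[m] P)
      rw [Function.iterate_succ_apply']
      omega
  have hQroots : Multiset.card Q.roots = k := by
    refine le_antisymm (le_trans (Polynomial.card_roots' Q) (le_of_eq hQdeg)) ?_
    have := hcard (n-k)
    rw [← hQ_def] at this
    omega
  have hQvieta : ∀ m, m ≤ k →
      Q.coeff (k - m) = Q.leadingCoeff * ((-1)^m * Q.roots.esymm m) := by
    intro m hm
    have h := Polynomial.coeff_eq_esymm_roots_of_card (hQroots.trans hQdeg.symm)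
      (k := k - m) (by omega)
    rw [hQdeg, show k - (k - m) = m by omega] at h
    rw [h]; ring
  have hL : Q.leadingCoeff = (n.descFactorial (n-k) : ℝ) := by
    rw [leadingCoeff, hQdeg, hQk]
  have hLpos : (0:ℝ) < Q.leadingCoeff := by rw [hL]; exact_mod_cast hdfpos
  -- relate roots esymm to esymm of v
  have hrel : ∀ m, m ≤ k → Q.leadingCoeff * Q.roots.esymm m
      = ((n-m).descFactorial (n-k) : ℝ) * esymm n m v := by
    intro m hm
    have h := (hQvieta m hm).symm.trans (hQcoeff m hm)
    have hpow : ((-1:ℝ)^m) ≠ 0 := by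
      apply pow_ne_zero; norm_num
    exact mul_left_cancel₀ hpow (by linear_combination h)
  have hRk1 : Q.roots.esymm (k-1) = 0 := by
    have h := hrel (k-1) (by omega)
    rw [h1, mul_zero] at h
    rcases mul_eq_zero.mp h with h' | h'
    · exact absurd h' hLpos.ne'
    · exact h'
  have hdf : ∀ m, m ≤ k → (0:ℝ) < ((n-m).descFactorial (n-k) : ℕ) := by
    intro m hm
    have : ¬ (n - m < n - k) := by omega
    rw [← Nat.descFactorial_eq_zero_iff_lt] at this
    exact_mod_cast Nat.pos_of_ne_zero this
  have hRk2 : 0 < Q.roots.esymm (k-2) := by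
    have h := hrel (k-2) (by omega)
    nlinarith [mul_pos (hdf (k-2) (by omega)) h2, hLpos]
  have hRk : 0 < Q.roots.esymm k := by
    have h := hrel k le_rfl
    nlinarith [mul_pos (hdf k le_rfl) h3, hLpos]
  -- enumerate the roots of Q
  obtain ⟨l, hl⟩ : ∃ l : List ℝ, Q.roots.toList = l := ⟨_, rfl⟩
  have hlen : l.length = k := by rw [← hl, Multiset.length_toList, hQroots]
  set g : Fin k → ℝ := fun i => l.get (Fin.cast hlen.symm i) with hg_def
  have hofn : List.ofFn g = l := by
    apply List.ext_getElem
    · simp [hlen]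
    · intro i h1i h2i
      simp [hg_def, List.getElem_ofFn]
  have hmap : (Finset.univ.val.map g) = Q.roots := by
    rw [Fin.univ_val_map, hofn, ← hl, Multiset.coe_toList]
  have hsymm : ∀ m, esymm k m g = Q.roots.esymm m := by
    intro m
    rw [← hmap, Finset.esymm_map_val]
    rfl
  have hcardu : (Finset.univ : Finset (Fin k)).card = k := by simp
  have hid := key_identity (Finset.univ : Finset (Fin k)) g (by rw [hcardu]; exact hk2)
  rw [hcardu] at hid
  have hprod := eS_self (Finset.univ : Finset (Fin k)) g
  rw [hcardu] at hprod
  rw [← esymm_eq_eS, ← esymm_eq_eS] at hid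
  have hA : esymm k (k-1) g = 0 := by rw [hsymm]; exact hRk1
  have hB : 0 < esymm k (k-2) g := by rw [hsymm]; exact hRk2
  have hprodpos : 0 < ∏ i ∈ (Finset.univ : Finset (Fin k)), g i := by
    have e : eS Finset.univ k g = Q.roots.esymm k := (esymm_eq_eS k g).symm.trans (hsymm k)
    rw [← hprod, e]
    exact hRk
  have hsumsq : 0 ≤ ∑ i ∈ (Finset.univ : Finset (Fin k)), (∏ j ∈ Finset.univ.erase i, g j)^2 :=
    Finset.sum_nonneg fun i _ => sq_nonneg _
  rw [hA] at hid
  nlinarith [hid, hsumsq, mul_pos hprodpos hB]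

lemma gammaK_mono {k l : ℕ} (h : l ≤ k) {x : Fin n → ℝ} (hx : GammaK n k x) : GammaK n l x :=
  fun m hm1 hm2 => hx m hm1 (hm2.trans h)

lemma ivt_aux (i : Fin n) (k : ℕ) (x : Fin n → ℝ) (hkn : k + 1 ≤ n)
    (hle : esymm n k (Function.update x i 0) ≤ 0) :
    ∃ t : ℝ, 0 ≤ t ∧ esymm n k (Function.update (fun l => x l + t) i 0) = 0 := by
  set S := ((Finset.univ : Finset (Fin n)).erase i).powersetCard k with hS
  have hgrw : ∀ t : ℝ, esymm n k (Function.update (fun l => x l + t) i 0)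
      = ∑ A ∈ S, ∏ l ∈ A, (x l + t) := by
    intro t
    rw [esymm_eq_eS, eS_update_zero]
    rfl
  set f : ℝ → ℝ := fun t => ∑ A ∈ S, ∏ l ∈ A, (x l + t) with hf
  have hcont : Continuous f := by
    apply continuous_finset_sum
    intro A _
    apply continuous_finset_prod
    intro l _
    exact continuous_const.add continuous_id
  obtain ⟨T, hT0, hTpos⟩ : ∃ T : ℝ, 0 ≤ T ∧ ∀ l : Fin n, 0 < x l + T := by
    refine ⟨1 + ∑ j, |x j|, by positivity, fun l => ?_⟩
    have h1 : |x l| ≤ ∑ j, |x j| :=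
      Finset.single_le_sum (f := fun j => |x j|) (fun j _ => abs_nonneg _) (mem_univ l)
    nlinarith [neg_abs_le (x l)]
  have hSne : S.Nonempty := by
    rw [hS]
    apply Finset.powersetCard_nonempty.mpr
    rw [card_erase_of_mem (mem_univ i)]
    simp only [Finset.card_univ, Fintype.card_fin]
    omega
  have hfT : 0 < f T := by
    apply Finset.sum_pos
    · intro A _
      exact Finset.prod_pos (fun l _ => hTpos l)
    · exact hSne
  have hf0 : f 0 ≤ 0 := by
    have hx0 : (fun l => x l + (0:ℝ)) = x := by funext l; ring
    have h := hgrw 0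
    have he : f 0 = esymm n k (Function.update x i 0) := by
      rw [← hx0]
      exact h.symm
    rw [he]
    exact hle
  have h0mem : (0:ℝ) ∈ Set.Icc (f 0) (f T) := ⟨hf0, le_of_lt hfT⟩
  obtain ⟨t, ht, hft⟩ := intermediate_value_Icc hT0 hcont.continuousOn h0mem
  exact ⟨t, ht.1, by rw [hgrw t]; exact hft⟩

lemma key_pos : ∀ k : ℕ, ∀ x : Fin n → ℝ, 1 ≤ k → GammaK n k x →
    ∀ i : Fin n, 0 < esymm n (k-1) (Function.update x i 0) := by
  intro k
  induction k with
  | zero => intro x h; omega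
  | succ k ih =>
    intro x _ hx i
    rcases Nat.eq_zero_or_pos k with hk0 | hk1
    · subst hk0
      rw [show 1 - 1 = 0 from rfl, esymm_zero_level]
      norm_num
    · have hkn : k + 1 ≤ n := by
        by_contra hno
        have h0 := esymm_of_lt (show n < k+1 by omega) x
        have h1 := hx (k+1) (by omega) le_rfl
        rw [h0] at h1
        exact lt_irrefl 0 h1
      rw [Nat.add_sub_cancel]
      by_contra hle
      push_neg at hle
      obtain ⟨t, ht0, hft⟩ := ivt_aux i k x hkn hle
      set y : Fin n → ℝ := fun l => x l + t with hy
      have hyG : GammaK n (k+1) y := by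
        intro m hm1 hm2
        rw [hy]
        apply esymm_add_pos (by omega) x ?_ ht0
        intro l hl
        rcases Nat.eq_zero_or_pos l with h0 | h1'
        · subst h0; rw [esymm_zero_level]; norm_num
        · exact hx l h1' (by omega)
      have hA : esymm n k (Function.update y i 0) = 0 := hft
      have hB : 0 < esymm n (k-1) (Function.update y i 0) :=
        ih y hk1 (gammaK_mono (by omega) hyG) i
      have hC : 0 < esymm n (k+1) y := hyG (k+1) (by omega) le_rfl
      have hsplit := esymm_split y i k
      rw [hA, mul_zero, zero_add] at hsplit
      have hD : 0 < esymm n (k+1) (Function.update y i 0) := by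
        rw [← hsplit]; exact hC
      have hNS := newton_special (k+1) (by omega) hkn (Function.update y i 0)
        (by rw [show k+1-1 = k from rfl]; exact hA)
        (by rw [show k+1-2 = k-1 from rfl]; exact hB)
      exact absurd hD (not_lt.mpr hNS)

end FCLB

theorem first_coord_lower_bound (n k : ℕ) (hn : 0 < n) (hk : 1 ≤ k) (hkn : k ≤ n)
    (x : Fin n → ℝ) (hx : GammaK n k x) (hmono : Antitone x) :
    x ⟨0, hn⟩ * esymm n (k - 1) (Function.update x ⟨0, hn⟩ 0) ≥
      ((k : ℝ) / (n : ℝ)) * esymm n k x := by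
  classical
  obtain ⟨k', rfl⟩ : ∃ k', k = k' + 1 := ⟨k-1, by omega⟩
  set i₀ : Fin n := ⟨0, hn⟩ with hi0
  set μ : Fin n → ℝ := Function.update x i₀ 0 with hμ
  have hmax : ∀ j, x j ≤ x i₀ := by
    intro j
    apply hmono
    rw [hi0]
    exact Fin.mk_le_of_le_val (Nat.zero_le _)
  have hx1pos : 0 < x i₀ := by
    have h1 := hx 1 le_rfl (by omega)
    rw [FCLB.esymm_one_level] at h1
    by_contra hle
    push_neg at hle
    have hnp : ∑ j, x j ≤ 0 := Finset.sum_nonpos (fun j _ => (hmax j).trans hle)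
    linarith
  have hs : 0 < esymm n k' μ := FCLB.key_pos (k'+1) x (by omega) hx i₀
  have hc1 : ((n - (k'+1) : ℕ) : ℝ) = (n:ℝ) - (k'+1 : ℝ) := by
    rw [Nat.cast_sub hkn]
    push_cast
    ring
  have claim : ((k'+1 : ℕ):ℝ) * esymm n (k'+1) μ
      ≤ ((n - (k'+1) : ℕ) : ℝ) * (x i₀ * esymm n k' μ) := by
    rcases le_or_gt (esymm n (k'+1) μ) 0 with hneg | hpos
    · have h1 : ((k'+1:ℕ):ℝ) * esymm n (k'+1) μ ≤ 0 := by
        apply mul_nonpos_of_nonneg_of_nonpos ?_ hneg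
        positivity
      have h2 : 0 ≤ ((n - (k'+1):ℕ):ℝ) * (x i₀ * esymm n k' μ) := by
        have := mul_pos hx1pos hs
        positivity
      linarith
    · have hμG : GammaK n (k'+1) μ := by
        intro m hm1 hm2
        rcases eq_or_lt_of_le hm2 with heq | hlt
        · rw [heq]; exact hpos
        · have hm : m ≤ k' := by omega
          have hxm : GammaK n (m+1) x := FCLB.gammaK_mono (by omega) hx
          have := FCLB.key_pos (m+1) x (by omega) hxm i₀
          rw [Nat.add_sub_cancel] at this
          rcases Nat.eq_zero_or_pos m with h0 | h1
          · omega
          · obtain ⟨m', rfl⟩ : ∃ m', m = m' + 1 := ⟨m-1, by omega⟩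
            have hxm2 : GammaK n (m'+1+1) x := FCLB.gammaK_mono (by omega) hx
            have h2 := FCLB.key_pos (m'+1+1) x (by omega) hxm2 i₀
            rw [Nat.add_sub_cancel] at h2
            exact h2
      have hI3 : (n:ℝ) * esymm n (k'+1) μ
          = (∑ j : Fin n, μ j * esymm n k' (Function.update μ j 0))
            + ((n - (k'+1) : ℕ):ℝ) * esymm n (k'+1) μ := by
        calc (n:ℝ) * esymm n (k'+1) μ = ∑ _j : Fin n, esymm n (k'+1) μ := by
              rw [Finset.sum_const, Finset.card_univ, Fintype.card_fin, nsmul_eq_mul]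
        _ = ∑ j : Fin n, (μ j * esymm n k' (Function.update μ j 0)
              + esymm n (k'+1) (Function.update μ j 0)) :=
            Finset.sum_congr rfl (fun j _ => FCLB.esymm_split μ j k')
        _ = (∑ j : Fin n, μ j * esymm n k' (Function.update μ j 0))
              + ∑ j : Fin n, esymm n (k'+1) (Function.update μ j 0) := Finset.sum_add_distrib
        _ = _ := by rw [FCLB.esymm_sum_update]
      have hsum_eq : ∑ j : Fin n, μ j * esymm n k' (Function.update μ j 0)
          = ((k'+1:ℕ):ℝ) * esymm n (k'+1) μ := by
        rw [hc1] at hI3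
        push_cast
        push_cast at hI3
        linarith
      have hμi0 : μ i₀ = 0 := by rw [hμ, Function.update_self]
      have hsplit0 : ∑ j : Fin n, μ j * esymm n k' (Function.update μ j 0)
          = ∑ j ∈ Finset.univ.erase i₀, μ j * esymm n k' (Function.update μ j 0) := by
        rw [← Finset.add_sum_erase _ _ (mem_univ i₀), hμi0, zero_mul, zero_add]
      have hbound : ∑ j ∈ Finset.univ.erase i₀, μ j * esymm n k' (Function.update μ j 0)
          ≤ ∑ j ∈ Finset.univ.erase i₀, x i₀ * esymm n k' (Function.update μ j 0) := by
        apply Finset.sum_le_sum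
        intro j hj
        have hpos' : 0 < esymm n k' (Function.update μ j 0) :=
          FCLB.key_pos (k'+1) μ (by omega) hμG j
        apply mul_le_mul_of_nonneg_right ?_ hpos'.le
        rcases eq_or_ne j i₀ with rfl | hne
        · rw [hμi0]; exact hx1pos.le
        · rw [hμ, Function.update_of_ne hne]; exact hmax j
      have hterm : esymm n k' (Function.update μ i₀ 0) = esymm n k' μ := by
        rw [hμ, Function.update_idem]
      have hsum2 : ∑ j ∈ Finset.univ.erase i₀, esymm n k' (Function.update μ j 0)
          = ((n - (k'+1) : ℕ):ℝ) * esymm n k' μ := by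
        have hall := FCLB.esymm_sum_update μ k'
        rw [← Finset.add_sum_erase _ _ (mem_univ i₀), hterm] at hall
        have hc2 : ((n - k' : ℕ):ℝ) = (n:ℝ) - (k' : ℝ) := by
          rw [Nat.cast_sub (by omega)]
        rw [hc2] at hall
        rw [hc1]
        push_cast
        push_cast at hall
        linarith
      calc ((k'+1:ℕ):ℝ) * esymm n (k'+1) μ
          = ∑ j ∈ Finset.univ.erase i₀, μ j * esymm n k' (Function.update μ j 0) := by
            rw [← hsum_eq, hsplit0]
      _ ≤ ∑ j ∈ Finset.univ.erase i₀, x i₀ * esymm n k' (Function.update μ j 0) := hbound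
      _ = x i₀ * ∑ j ∈ Finset.univ.erase i₀, esymm n k' (Function.update μ j 0) := by
            rw [Finset.mul_sum]
      _ = ((n - (k'+1) : ℕ):ℝ) * (x i₀ * esymm n k' μ) := by rw [hsum2]; ring
  have hsplitx := FCLB.esymm_split x i₀ k'
  rw [← hμ] at hsplitx
  have hkey : ((k'+1:ℕ):ℝ) * esymm n (k'+1) x ≤ (n:ℝ) * (x i₀ * esymm n k' μ) := by
    rw [hc1] at claim
    push_cast at claim ⊢
    nlinarith [claim, hsplitx, mul_pos hx1pos hs]
  have hnpos : (0:ℝ) < n := by exact_mod_cast hn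
  rw [ge_iff_le, div_mul_eq_mul_div, div_le_iff₀ hnpos]
  rw [show k' + 1 - 1 = k' from rfl]
  push_cast at hkey ⊢
  linarith
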